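/- The Borsuk number of the flat n-torus Tⁿ is 3 for all n ≥ 1: Tⁿ can be partitioned into 3 sets of diameter strictly less than diam Tⁿ = √n/2, but not into 2 such sets. -/
import Mathlib

/-- The Euclidean (flat) distance on the torus `Tⁿ = ℝⁿ/ℤⁿ`. -/
noncomputable def torusDistN {n : ℕ} (u v : Fin n → AddCircle (1:ℝ)) : ℝ :=
  Real.sqrt (∑ i, ‖u i - v i‖ ^ 2)

/-- The diameter of a subset of the flat torus `Tⁿ`. -/
noncomputable def torusDiamN {n : ℕ} (F : Set (Fin n → AddCircle (1:ℝ))) : ℝ :=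
  sSup {d | ∃ u ∈ F, ∃ v ∈ F, d = torusDistN u v}

lemma tb_norm_le_half (x : AddCircle (1:ℝ)) : ‖x‖ ≤ 1/2 := by
  simpa using AddCircle.norm_le_half_period (1:ℝ) one_ne_zero (x := x)

lemma tb_sqrt_quarter (c : ℝ) (hc : 0 ≤ c) : Real.sqrt (c / 4) = Real.sqrt c / 2 := by
  rw [show c/4 = c/(2^2) by ring, Real.sqrt_div hc, Real.sqrt_sq (by norm_num)]

lemma tb_dist_le {n : ℕ} (u v : Fin n → AddCircle (1:ℝ)) :
    torusDistN u v ≤ Real.sqrt n / 2 := by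
  rw [torusDistN, ← tb_sqrt_quarter _ (Nat.cast_nonneg n)]
  apply Real.sqrt_le_sqrt
  calc ∑ i, ‖u i - v i‖ ^ 2 ≤ ∑ _i : Fin n, (1/2:ℝ)^2 := by
        apply Finset.sum_le_sum
        intro i _
        have := tb_norm_le_half (u i - v i)
        nlinarith [norm_nonneg (u i - v i)]
   _ = (n:ℝ)/4 := by simp [Finset.sum_const]; ring

lemma tb_bdd {n : ℕ} (F : Set (Fin n → AddCircle (1:ℝ))) :
    BddAbove {d | ∃ u ∈ F, ∃ v ∈ F, d = torusDistN u v} := by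
  refine ⟨Real.sqrt n / 2, ?_⟩
  rintro d ⟨u, -, v, -, rfl⟩
  exact tb_dist_le u v

lemma tb_half_mem {n : ℕ} (x : Fin n → AddCircle (1:ℝ)) :
    torusDistN x (x + fun _ => ((1/2:ℝ) : AddCircle (1:ℝ))) = Real.sqrt n / 2 := by
  rw [torusDistN, ← tb_sqrt_quarter _ (Nat.cast_nonneg n)]
  congr 1
  have key : ∀ i : Fin n, ‖x i - (x i + ((1/2:ℝ) : AddCircle (1:ℝ)))‖ ^ 2 = (1/2:ℝ)^2 := by
    intro i
    have h1 : x i - (x i + ((1/2:ℝ) : AddCircle (1:ℝ))) = -((1/2:ℝ) : AddCircle (1:ℝ)) := by abel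
    rw [h1, norm_neg,
      show ‖((1/2 : ℝ) : AddCircle (1:ℝ))‖ = 1/2 by simpa using AddCircle.norm_half_period_eq (1:ℝ)]
  simp only [Pi.add_apply]
  rw [Finset.sum_congr rfl (fun i _ => key i)]
  simp [Finset.sum_const]; ring

lemma tb_diag_dist {n : ℕ} (s t : ℝ) :
    torusDistN (fun _ : Fin n => (s : AddCircle (1:ℝ))) (fun _ => (t : AddCircle (1:ℝ))) =
      Real.sqrt n * ‖((s - t : ℝ) : AddCircle (1:ℝ))‖ := by
  rw [torusDistN]
  have : ∀ _i : Fin n, ((s : AddCircle (1:ℝ)) - (t : AddCircle (1:ℝ))) = ((s - t : ℝ) : AddCircle (1:ℝ)) := by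
    intro _; norm_cast
  simp only [Finset.sum_congr rfl (fun i _ => congrArg (fun z => ‖z‖^2) (this i)), Finset.sum_const, Finset.card_univ, Fintype.card_fin, nsmul_eq_mul]
  rw [Real.sqrt_mul (Nat.cast_nonneg n), Real.sqrt_sq (norm_nonneg _)]


noncomputable def tbSlab (n : ℕ) (hn : 1 ≤ n) (k : Fin 3) : Set (Fin n → AddCircle (1:ℝ)) :=
  {u | ∃ a : ℝ, a ∈ Set.Ico ((k.val : ℝ)/3) (((k.val : ℝ)+1)/3) ∧ u ⟨0, hn⟩ = (a : AddCircle (1:ℝ))}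

lemma tbSlab_cover (n : ℕ) (hn : 1 ≤ n) : (⋃ k, tbSlab n hn k) = Set.univ := by
  ext u
  simp only [Set.mem_iUnion, Set.mem_univ, iff_true]
  obtain ⟨r, hr⟩ : ∃ r : ℝ, (r : AddCircle (1:ℝ)) = u ⟨0, hn⟩ :=
    QuotientAddGroup.mk_surjective (u ⟨0, hn⟩)
  set a := r - (⌊r⌋ : ℝ) with ha
  have ha0 : 0 ≤ a := by have := Int.floor_le r; simp only [ha]; linarith
  have ha1 : a < 1 := by have := Int.lt_floor_add_one r; simp only [ha]; linarith
  have hua : u ⟨0, hn⟩ = (a : AddCircle (1:ℝ)) := by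
    have hz : (((⌊r⌋ : ℝ)) : AddCircle (1:ℝ)) = 0 := by
      rw [AddCircle.coe_eq_zero_iff]; exact ⟨⌊r⌋, by simp⟩
    rw [← hr, ha, AddCircle.coe_sub, hz, sub_zero]
  rcases lt_or_ge a (1/3) with h1 | h1
  · exact ⟨⟨0, by norm_num⟩, a, ⟨by norm_num; linarith, by norm_num; linarith⟩, hua⟩
  · rcases lt_or_ge a (2/3) with h2 | h2
    · exact ⟨⟨1, by norm_num⟩, a, ⟨by norm_num; linarith, by norm_num; linarith⟩, hua⟩
    · exact ⟨⟨2, by norm_num⟩, a, ⟨by norm_num; linarith, by norm_num; linarith⟩, hua⟩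

lemma tbSlab_disj (n : ℕ) (hn : 1 ≤ n) : Pairwise (Function.onFun Disjoint (tbSlab n hn)) := by
  intro i j hij
  rw [Function.onFun, Set.disjoint_left]
  rintro u ⟨a, ⟨hai, hai'⟩, hua⟩ ⟨b, ⟨hbj, hbj'⟩, hub⟩
  have hi3 : (i.val : ℝ) ≤ 2 := by exact_mod_cast Nat.le_of_lt_succ i.isLt
  have hj3 : (j.val : ℝ) ≤ 2 := by exact_mod_cast Nat.le_of_lt_succ j.isLt
  have hi0 : (0:ℝ) ≤ (i.val : ℝ) := Nat.cast_nonneg _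
  have hj0 : (0:ℝ) ≤ (j.val : ℝ) := Nat.cast_nonneg _
  have hab : a = b := by
    have hcoe : (a : AddCircle (1:ℝ)) = (b : AddCircle (1:ℝ)) := by rw [← hua, ← hub]
    have hIa : a ∈ Set.Ico (0:ℝ) (0 + 1) := ⟨by linarith, by linarith⟩
    have hIb : b ∈ Set.Ico (0:ℝ) (0 + 1) := ⟨by linarith, by linarith⟩
    exact (AddCircle.coe_eq_coe_iff_of_mem_Ico hIa hIb).mp hcoe
  rw [hab] at hai hai'
  have h1 : (i.val : ℝ) < (j.val : ℝ) + 1 := by linarith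
  have h2 : (j.val : ℝ) < (i.val : ℝ) + 1 := by linarith
  have : i.val = j.val := by
    have h1' : i.val < j.val + 1 := by exact_mod_cast h1
    have h2' : j.val < i.val + 1 := by exact_mod_cast h2
    omega
  exact hij (Fin.ext this)

lemma tbSlab_diam (n : ℕ) (hn : 1 ≤ n) (k : Fin 3) (u v : Fin n → AddCircle (1:ℝ))
    (hu : u ∈ tbSlab n hn k) (hv : v ∈ tbSlab n hn k) :
    torusDistN u v ≤ Real.sqrt ((n:ℝ)/4 - 5/36) := by
  obtain ⟨a, ⟨ha1, ha2⟩, hua⟩ := hu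
  obtain ⟨b, ⟨hb1, hb2⟩, hvb⟩ := hv
  rw [torusDistN]
  apply Real.sqrt_le_sqrt
  set i0 : Fin n := ⟨0, hn⟩ with hi0
  have hterm0 : ‖u i0 - v i0‖ ^ 2 ≤ (1/3:ℝ)^2 := by
    have habs : |a - b| ≤ 1/3 := abs_le.mpr ⟨by linarith, by linarith⟩
    have : u i0 - v i0 = ((a - b : ℝ) : AddCircle (1:ℝ)) := by rw [hua, hvb]; norm_cast
    rw [this, (AddCircle.norm_coe_eq_abs_iff (1:ℝ) one_ne_zero).mpr (by simp; linarith [abs_nonneg (a-b)])]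
    nlinarith [abs_nonneg (a - b)]
  have hrest : ∑ i ∈ Finset.univ.erase i0, ‖u i - v i‖ ^ 2 ≤ ((n:ℝ) - 1) * (1/2:ℝ)^2 := by
    have := Finset.sum_le_card_nsmul (Finset.univ.erase i0) (fun i => ‖u i - v i‖ ^ 2) ((1/2:ℝ)^2)
      (fun i _ => by
        have := AddCircle.norm_le_half_period (1:ℝ) one_ne_zero (x := u i - v i)
        simp only [abs_one] at this
        nlinarith [norm_nonneg (u i - v i)])
    rw [Finset.card_erase_of_mem (Finset.mem_univ i0), Finset.card_univ, Fintype.card_fin,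
      nsmul_eq_mul] at this
    calc _ ≤ ((n - 1 : ℕ):ℝ) * (1/2:ℝ)^2 := this
      _ = ((n:ℝ) - 1) * (1/2:ℝ)^2 := by rw [Nat.cast_sub hn]; norm_num
  calc ∑ i, ‖u i - v i‖ ^ 2
      = ‖u i0 - v i0‖ ^ 2 + ∑ i ∈ Finset.univ.erase i0, ‖u i - v i‖ ^ 2 :=
        (Finset.add_sum_erase Finset.univ _ (Finset.mem_univ i0)).symm
    _ ≤ (1/3:ℝ)^2 + ((n:ℝ) - 1) * (1/2:ℝ)^2 := by linarith
    _ = (n:ℝ)/4 - 5/36 := by ring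



lemma tb_core (A : Set ℝ) (hA : ∀ t : ℝ, t + 1/2 ∈ A ↔ t ∉ A) (h0 : (0:ℝ) ∈ A)
    (ε : ℝ) (hε : 0 < ε) (hε' : ε < 1/8) :
    ∃ s ∈ A, ∃ t ∈ A, 1/2 - 2*ε ≤ ‖((s - t : ℝ) : AddCircle (1:ℝ))‖ := by
  set S : Set ℝ := Aᶜ ∩ Set.Icc 0 (1/2) with hS
  have hhalf : (1/2 : ℝ) ∉ A := by
    have := (hA 0).mpr
    intro h; exact ((hA 0).mp (by simpa using h)) h0
  have hmemS : (1/2 : ℝ) ∈ S := ⟨hhalf, by norm_num, le_refl _⟩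
  have hne : S.Nonempty := ⟨_, hmemS⟩
  have hbdd : BddBelow S := ⟨0, fun x hx => hx.2.1⟩
  set c := sInf S with hc
  have hc0 : 0 ≤ c := le_csInf hne (fun x hx => hx.2.1)
  have hch : c ≤ 1/2 := csInf_le hbdd hmemS
  obtain ⟨t', ht'S, ht'lt⟩ : ∃ t' ∈ S, t' < c + ε :=
    exists_lt_of_csInf_lt hne (lt_add_of_pos_right c hε)
  have hct' : c ≤ t' := csInf_le hbdd ht'S
  set s := max 0 (c - ε) with hs
  have hsc : s ≤ c := max_le hc0 (by linarith)
  have hs0 : 0 ≤ s := le_max_left _ _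
  have hsge : c - ε ≤ s := le_max_right _ _
  have hsA : s ∈ A := by
    rcases eq_or_lt_of_le hc0 with hceq | hcpos
    · have : s = 0 := le_antisymm (max_le (le_refl 0) (by linarith)) hs0
      rwa [this]
    · have hslt : s < c := lt_of_le_of_ne hsc (by
        intro h
        rcases max_cases 0 (c - ε) with ⟨h1, _⟩ | ⟨h1, _⟩ <;> rw [hs, h1] at h <;> linarith)
      have hnotS : s ∉ S := notMem_of_lt_csInf hslt hbdd
      by_contra hsnA
      exact hnotS ⟨hsnA, hs0, by linarith⟩
  set t := t' - 1/2 with ht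
  have htA : t ∈ A := by
    by_contra htnA
    have := (hA t).mpr htnA
    rw [ht] at this
    simp only [sub_add_cancel] at this
    exact ht'S.1 this
  refine ⟨s, hsA, t, htA, ?_⟩
  have hr1 : s - t ≤ 1/2 := by
    have := ht'S.2.1; rw [ht]; linarith
  have hr2 : 1/2 - 2*ε ≤ s - t := by rw [ht]; linarith
  have habs : |s - t| ≤ 1/2 := abs_le.mpr ⟨by linarith, hr1⟩
  rw [(AddCircle.norm_coe_eq_abs_iff (1:ℝ) one_ne_zero).mpr (by simpa using habs)]
  calc 1/2 - 2*ε ≤ s - t := hr2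
    _ ≤ |s - t| := le_abs_self _


theorem torus_borsuk_number_three (n : ℕ) (hn : 1 ≤ n) :
    torusDiamN (Set.univ : Set (Fin n → AddCircle (1:ℝ))) = Real.sqrt n / 2 ∧
    (∃ F : Fin 3 → Set (Fin n → AddCircle (1:ℝ)),
        (⋃ i, F i) = Set.univ ∧
        Pairwise (Function.onFun Disjoint F) ∧
        ∀ i, torusDiamN (F i) < Real.sqrt n / 2) ∧
    (∀ F : Fin 2 → Set (Fin n → AddCircle (1:ℝ)),
        (⋃ i, F i) = Set.univ →
        ∃ i, Real.sqrt n / 2 ≤ torusDiamN (F i)) := by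
  have hn1 : (1:ℝ) ≤ (n:ℝ) := by exact_mod_cast hn
  refine ⟨?_, ?_, ?_⟩
  · -- Part 1 : diameter of the full torus
    apply le_antisymm
    · apply Real.sSup_le
      · rintro d ⟨u, -, v, -, rfl⟩
        exact tb_dist_le u v
      · positivity
    · apply le_csSup (tb_bdd _)
      exact ⟨0, trivial, 0 + fun _ => ((1/2:ℝ) : AddCircle (1:ℝ)), trivial, (tb_half_mem 0).symm⟩
  · -- Part 2 : partition into three slabs
    refine ⟨tbSlab n hn, tbSlab_cover n hn, tbSlab_disj n hn, fun k => ?_⟩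
    have hle : torusDiamN (tbSlab n hn k) ≤ Real.sqrt ((n:ℝ)/4 - 5/36) := by
      apply Real.sSup_le
      · rintro d ⟨u, hu, v, hv, rfl⟩
        exact tbSlab_diam n hn k u v hu hv
      · positivity
    refine lt_of_le_of_lt hle ?_
    rw [← tb_sqrt_quarter _ (by positivity)]
    apply Real.sqrt_lt_sqrt (by linarith) (by linarith)
  · -- Part 3 : no partition into two small sets
    intro F hcover
    set h : Fin n → AddCircle (1:ℝ) := fun _ => ((1/2:ℝ) : AddCircle (1:ℝ)) with hh
    by_cases hap : ∃ i : Fin 2, ∃ x, x ∈ F i ∧ x + h ∈ F i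
    · obtain ⟨i, x, hx1, hx2⟩ := hap
      refine ⟨i, ?_⟩
      apply le_csSup (tb_bdd _)
      exact ⟨x, hx1, x + h, hx2, (tb_half_mem x).symm⟩
    · push_neg at hap
      have hcov : ∀ x : Fin n → AddCircle (1:ℝ), x ∈ F 0 ∨ x ∈ F 1 := by
        intro x
        have : x ∈ ⋃ i, F i := hcover ▸ Set.mem_univ x
        obtain ⟨i, hi⟩ := Set.mem_iUnion.mp this
        fin_cases i
        · exact Or.inl hi
        · exact Or.inr hi
      set γ : ℝ → (Fin n → AddCircle (1:ℝ)) := fun t _ => (t : AddCircle (1:ℝ)) with hγ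
      have hγadd : ∀ t : ℝ, γ (t + 1/2) = γ t + h := by
        intro t; funext i
        simp only [hγ, hh, Pi.add_apply]
        norm_cast
      set A : Set ℝ := {t | γ t ∈ F 0} with hAdef
      have hA : ∀ t : ℝ, t + 1/2 ∈ A ↔ t ∉ A := by
        intro t
        constructor
        · intro h2 h1
          exact hap 0 (γ t) h1 (by rw [← hγadd]; exact h2)
        · intro h1
          have hF1 : γ t ∈ F 1 := (hcov (γ t)).resolve_left h1
          have : γ t + h ∉ F 1 := hap 1 (γ t) hF1
          have : γ t + h ∈ F 0 := (hcov _).resolve_right this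
          rw [← hγadd] at this
          exact this
      -- reduce to the case `0 ∈ A`
      have hpairs : ∀ ε : ℝ, 0 < ε → ε < 1/8 →
          ∃ s ∈ A, ∃ t ∈ A, 1/2 - 2*ε ≤ ‖((s - t : ℝ) : AddCircle (1:ℝ))‖ := by
        intro ε hε hε'
        by_cases h0 : (0:ℝ) ∈ A
        · exact tb_core A hA h0 ε hε hε'
        · set A₂ : Set ℝ := {t | t + 1/2 ∈ A} with hA₂def
          have hA₂ : ∀ t : ℝ, t + 1/2 ∈ A₂ ↔ t ∉ A₂ := by
            intro t
            show (t + 1/2) + 1/2 ∈ A ↔ t + 1/2 ∉ A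
            exact hA (t + 1/2)
          have h0₂ : (0:ℝ) ∈ A₂ := by
            show (0:ℝ) + 1/2 ∈ A
            exact (hA 0).mpr h0
          obtain ⟨s, hs, t, ht, hst⟩ := tb_core A₂ hA₂ h0₂ ε hε hε'
          refine ⟨s + 1/2, hs, t + 1/2, ht, ?_⟩
          have : s + 1/2 - (t + 1/2) = s - t := by ring
          rw [this]
          exact hst
      refine ⟨0, ?_⟩
      have hg : 0 < Real.sqrt n := Real.sqrt_pos.mpr (by linarith)
      apply le_of_forall_pos_le_add
      intro δ hδ
      set ε := min (1/16 : ℝ) (δ / (2 * Real.sqrt n)) with hεdef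
      have hε0 : 0 < ε := lt_min (by norm_num) (by positivity)
      have hε8 : ε < 1/8 := lt_of_le_of_lt (min_le_left _ _) (by norm_num)
      obtain ⟨s, hs, t, ht, hst⟩ := hpairs ε hε0 hε8
      have hdist : torusDistN (γ s) (γ t) = Real.sqrt n * ‖((s - t : ℝ) : AddCircle (1:ℝ))‖ :=
        tb_diag_dist s t
      have hmem : Real.sqrt n * ‖((s - t : ℝ) : AddCircle (1:ℝ))‖ ∈
          {d | ∃ u ∈ F 0, ∃ v ∈ F 0, d = torusDistN u v} :=
        ⟨γ s, hs, γ t, ht, hdist.symm⟩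
      have hle : Real.sqrt n * ‖((s - t : ℝ) : AddCircle (1:ℝ))‖ ≤ torusDiamN (F 0) :=
        le_csSup (tb_bdd _) hmem
      have h1 : Real.sqrt n * (1/2 - 2*ε) ≤ torusDiamN (F 0) := by
        refine le_trans ?_ hle
        exact mul_le_mul_of_nonneg_left hst hg.le
      have h2 : 2 * Real.sqrt n * ε ≤ δ := by
        have hεle : ε ≤ δ / (2 * Real.sqrt n) := min_le_right _ _
        calc 2 * Real.sqrt n * ε ≤ 2 * Real.sqrt n * (δ / (2 * Real.sqrt n)) := by
              apply mul_le_mul_of_nonneg_left hεle (by positivity)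
          _ = δ := by field_simp
      nlinarith
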